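/- Every pure O-sequence of type 2 in three variables is unimodal; that is, the h-vector of any pure monomial order ideal in at most three variables having exactly two maximal monomials is unimodal. -/

import Mathlib

/-- The degree of a monomial, given by its exponent vector. -/
def monDeg {r : ℕ} (M : Fin r → ℕ) : ℕ := ∑ j, M j

/-- `X` is a (monomial) order ideal: a nonempty finite set of monomials (exponent vectors)
closed under divisibility. -/
def IsOrderIdeal {r : ℕ} (X : Finset (Fin r → ℕ)) : Prop :=
  X.Nonempty ∧ ∀ M ∈ X, ∀ N : Fin r → ℕ, (∀ j, N j ≤ M j) → N ∈ X

/-- `M` is a maximal monomial of `X` with respect to divisibility. -/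
def IsMaxMon {r : ℕ} (X : Finset (Fin r → ℕ)) (M : Fin r → ℕ) : Prop :=
  M ∈ X ∧ ∀ N ∈ X, (∀ j, M j ≤ N j) → N = M

/-- `X` is a pure order ideal with socle degree `e`: it is an order ideal whose maximal
degree is `e` and all of whose maximal monomials have degree `e`. -/
def IsPureWithSocle {r : ℕ} (X : Finset (Fin r → ℕ)) (e : ℕ) : Prop :=
  IsOrderIdeal X ∧ (∀ M ∈ X, monDeg M ≤ e) ∧ (∃ M ∈ X, monDeg M = e) ∧
    ∀ M, IsMaxMon X M → monDeg M = e

/-- `h` agrees in degrees `≤ e` with the h-vector of `X`. -/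
def HasHVector {r : ℕ} (X : Finset (Fin r → ℕ)) (h : ℕ → ℕ) (e : ℕ) : Prop :=
  ∀ i ≤ e, h i = (X.filter fun M => monDeg M = i).card

/-- `h` is (in degrees `≤ e`) a pure O-sequence of socle degree `e`. -/
def IsPureOSeq (h : ℕ → ℕ) (e : ℕ) : Prop :=
  ∃ (r : ℕ) (X : Finset (Fin r → ℕ)), IsPureWithSocle X e ∧ HasHVector X h e

/-- `h` is a pure O-sequence of socle degree `e` and type `t`. -/
def IsPureOSeqOfType (h : ℕ → ℕ) (e t : ℕ) : Prop :=
  ∃ (r : ℕ) (X : Finset (Fin r → ℕ)), IsPureWithSocle X e ∧ HasHVector X h e ∧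
    {M : Fin r → ℕ | IsMaxMon X M}.ncard = t

/-- `((n)_(d))_1^1`, computed from the `d`-binomial (Macaulay) expansion of `n`
obtained greedily; by convention `((0)_(d))_1^1 = 0`. -/
def macaulayBound : ℕ → ℕ → ℕ
  | 0, _ => 0
  | (n+1), d =>
      Nat.choose (Nat.findGreatest (fun k => Nat.choose k d ≤ n + 1) (n + 1 + d) + 1) (d + 1) +
        macaulayBound
          ((n + 1) - Nat.choose (Nat.findGreatest (fun k => Nat.choose k d ≤ n + 1) (n + 1 + d)) d)
          (d - 1)
  termination_by n d => n
  decreasing_by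
    have hd : d ≤ Nat.findGreatest (fun k => Nat.choose k d ≤ n + 1) (n + 1 + d) :=
      Nat.le_findGreatest (by omega) (by simp [Nat.choose_self])
    have hpos := Nat.choose_pos hd
    omega

/-- `g` satisfies Macaulay's bound (in degrees `1 ≤ i ≤ e - 1`). -/
def SatisfiesMacaulay (g : ℕ → ℕ) (e : ℕ) : Prop :=
  ∀ i, 1 ≤ i → i + 1 ≤ e → g (i + 1) ≤ macaulayBound (g i) i

/-- `h` is an O-sequence of socle degree `e`. -/
def IsOSeq (h : ℕ → ℕ) (e : ℕ) : Prop :=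
  h 0 = 1 ∧ (∀ i ≤ e, 0 < h i) ∧ SatisfiesMacaulay h e

/-- `h` is differentiable: its first difference `(1, h 1 - h 0, …, h e - h (e-1))`
consists of nonnegative integers and satisfies Macaulay's bound. -/
def IsDifferentiable (h : ℕ → ℕ) (e : ℕ) : Prop :=
  h 0 = 1 ∧ (∀ i, 1 ≤ i → i ≤ e → h (i - 1) ≤ h i) ∧
    SatisfiesMacaulay (fun i => if i = 0 then 1 else h i - h (i - 1)) e



def Trap (p q k : ℤ) : ℤ :=
  max 0 (min (min (k + 1) (p + 1)) (min (q + 1) (p + q + 1 - k)))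

lemma Trap_mono_le {p q x y : ℤ} (hxy : x ≤ y) (h : y ≤ p + q - x) :
    Trap p q x ≤ Trap p q y := by
  simp only [Trap]; omega

lemma Trap_mono_ge {p q x y : ℤ} (hxy : x ≤ y) (h : p + q - y ≤ x) :
    Trap p q y ≤ Trap p q x := by
  simp only [Trap]; omega

lemma Trap_step (p q k : ℤ) (hp : 0 ≤ p) (hq : 0 ≤ q) :
    Trap p q k - Trap p q (k - 1) =
      (if 0 ≤ k ∧ k ≤ min p q then 1 else 0) -
        (if max p q + 1 ≤ k ∧ k ≤ p + q + 1 then 1 else 0) := by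
  simp only [Trap]; split_ifs <;> omega

section Key
variable {p q p' q' m m' : ℤ}

lemma S1 (hm0 : 0 ≤ m) (hmm : m < m') (hdeg : p + q + m = p' + q' + m') {i : ℤ}
    (hi : 2 * i < p + q + m) :
    0 ≤ Trap p q (i + 1) - Trap p q (i - m) + Trap p' q' (i - m) - Trap p' q' (i - m') := by
  have h1 : Trap p q (i - m) ≤ Trap p q (i + 1) := Trap_mono_le (by omega) (by omega)
  have h2 : Trap p' q' (i - m') ≤ Trap p' q' (i - m) := Trap_mono_le (by omega) (by omega)
  linarith

lemma S2 (hm0 : 0 ≤ m) (hmm : m < m') (hdeg : p + q + m = p' + q' + m') {i : ℤ}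
    (hi : p + q + m + m + 1 ≤ 2 * i) :
    Trap p q (i + 1) - Trap p q (i - m) + Trap p' q' (i - m) - Trap p' q' (i - m') ≤ 0 := by
  have h1 : Trap p q (i + 1) ≤ Trap p q (i - m) := Trap_mono_ge (by omega) (by omega)
  have h2 : Trap p' q' (i - m) ≤ Trap p' q' (i - m') := Trap_mono_ge (by omega) (by omega)
  linarith

lemma S3 (hp0 : 0 ≤ p') (hp : p' ≤ p) (hq0 : 0 ≤ q') (hq : q' ≤ q)
    (hm0 : 0 ≤ m) (hmm : m < m') (hdeg : p + q + m = p' + q' + m') {i : ℤ}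
    (hi1 : p + q + m ≤ 2 * i) (hi2 : 2 * (i + 1) ≤ p + q + m + m)
    (hi3 : i + 1 ≤ p + q + m - 1) :
    Trap p q (i + 1 + 1) - Trap p q (i + 1 - m) + Trap p' q' (i + 1 - m)
        - Trap p' q' (i + 1 - m')
      ≤ Trap p q (i + 1) - Trap p q (i - m) + Trap p' q' (i - m) - Trap p' q' (i - m') := by
  have h1 := Trap_step p q (i + 2) (by omega) (by omega)
  have h2 := Trap_step p q (i + 1 - m) (by omega) (by omega)
  have h3 := Trap_step p' q' (i + 1 - m) (by omega) (by omega)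
  have h4 := Trap_step p' q' (i + 1 - m') (by omega) (by omega)
  have e0 : i + 1 + 1 = i + 2 := by ring
  have e1 : i + 2 - 1 = i + 1 := by ring
  have e2 : i + 1 - m - 1 = i - m := by ring
  have e3 : i + 1 - m' - 1 = i - m' := by ring
  rw [e0]
  rw [e1] at h1; rw [e2] at h2 h3; rw [e3] at h4
  generalize Trap p q (i + 2) = t1 at h1 ⊢
  generalize Trap p q (i + 1) = t2 at h1 ⊢
  generalize Trap p q (i + 1 - m) = t3 at h2 ⊢
  generalize Trap p q (i - m) = t4 at h2 ⊢
  generalize Trap p' q' (i + 1 - m) = t5 at h3 ⊢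
  generalize Trap p' q' (i - m) = t6 at h3 ⊢
  generalize Trap p' q' (i + 1 - m') = t7 at h4 ⊢
  generalize Trap p' q' (i - m') = t8 at h4 ⊢
  split_ifs at h1 h2 h3 h4 <;> omega

lemma S3chain (hp0 : 0 ≤ p') (hp : p' ≤ p) (hq0 : 0 ≤ q') (hq : q' ≤ q)
    (hm0 : 0 ≤ m) (hmm : m < m') (hdeg : p + q + m = p' + q' + m') :
    ∀ (n : ℕ) (j : ℤ), p + q + m ≤ 2 * j → 2 * (j + n) ≤ p + q + m + m →
      j + n ≤ p + q + m - 1 →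
      Trap p q (j + n + 1) - Trap p q (j + n - m) + Trap p' q' (j + n - m)
          - Trap p' q' (j + n - m')
        ≤ Trap p q (j + 1) - Trap p q (j - m) + Trap p' q' (j - m) - Trap p' q' (j - m') := by
  intro n
  induction n with
  | zero => intro j _ _ _; simp
  | succ n ih =>
      intro j hj h1 h2
      have hcast : ((n : ℕ) + 1 : ℤ) = (n : ℤ) + 1 := by push_cast; ring
      push_cast at h1 h2 ⊢
      have hA : j + ((n : ℤ) + 1) = (j + n) + 1 := by ring
      rw [hA] at h1 h2 ⊢
      have step := S3 hp0 hp hq0 hq hm0 hmm hdeg (i := j + n) (by omega) (by omega) (by omega)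
      have tail := ih j hj (by omega) (by omega)
      linarith

theorem Tkey (hp0 : 0 ≤ p') (hp : p' ≤ p) (hq0 : 0 ≤ q') (hq : q' ≤ q)
    (hm0 : 0 ≤ m) (hmm : m < m') (hdeg : p + q + m = p' + q' + m') {i i' : ℤ}
    (hi0 : 0 ≤ i) (hii : i < i') (hi' : i' ≤ p + q + m - 1)
    (hF : Trap p q (i + 1) - Trap p q (i - m) + Trap p' q' (i - m) - Trap p' q' (i - m') < 0) :
    Trap p q (i' + 1) - Trap p q (i' - m) + Trap p' q' (i' - m) - Trap p' q' (i' - m') ≤ 0 := by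
  have hie : p + q + m ≤ 2 * i := by
    by_contra hc
    push_neg at hc
    have := S1 hm0 hmm hdeg hc
    linarith
  by_cases h2 : p + q + m + m + 1 ≤ 2 * i'
  · exact S2 hm0 hmm hdeg h2
  · push_neg at h2
    have hn : i' = i + ((i' - i).toNat : ℤ) := by omega
    have chain := S3chain hp0 hp hq0 hq hm0 hmm hdeg (i' - i).toNat i hie
      (by omega) (by omega)
    rw [hn]
    linarith
end Key


open Finset

/-- Number of pairs `(u,v)` with `u ≤ p`, `v ≤ q`, `u + v = k`. -/
def T2 (p q : ℕ) (k : ℤ) : ℕ :=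
  ((range (p + 1) ×ˢ range (q + 1)).filter fun t => (t.1 : ℤ) + (t.2 : ℤ) = k).card

lemma T2_eq (p q : ℕ) (k : ℤ) : (T2 p q k : ℤ) = Trap p q k := by
  by_cases hk : 0 ≤ k ∧ k ≤ (p : ℤ) + q
  · obtain ⟨kn, rfl⟩ : ∃ n : ℕ, k = (n : ℤ) := ⟨k.toNat, by omega⟩
    have hcard : T2 p q kn = (Finset.Icc (kn - q) (min p kn)).card := by
      apply Finset.card_nbij' (fun t => t.1) (fun u => (u, kn - u))
      · intro t ht
        simp only [T2, Finset.mem_coe, mem_filter, mem_product, mem_range] at ht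
        simp only [Finset.mem_coe, Finset.mem_Icc]
        omega
      · intro u hu
        simp only [Finset.mem_coe, Finset.mem_Icc] at hu
        simp only [Finset.mem_coe, mem_filter, mem_product, mem_range]
        push_cast
        omega
      · intro t ht
        simp only [Finset.mem_coe, mem_filter, mem_product, mem_range] at ht
        have h2 : kn - t.1 = t.2 := by omega
        exact Prod.ext rfl h2
      · intro u hu
        rfl
    rw [hcard, Nat.card_Icc]
    simp only [Trap]
    push_cast at hk ⊢
    omega
  · have h1 : T2 p q k = 0 := by
      apply Finset.card_eq_zero.2
      ext t
      simp only [T2, mem_filter, mem_product, mem_range, Finset.notMem_empty, iff_false, not_and]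
      intro h1 h2
      push_cast at hk ⊢
      omega
    rw [h1]
    simp only [Trap]
    omega

/-- Number of triples `(w,(u,v))` with `w ≤ m`, `u ≤ p`, `v ≤ q`, `u+v+w = i`. -/
def cnt3 (p q m i : ℕ) : ℕ :=
  ((range (m + 1) ×ˢ (range (p + 1) ×ˢ range (q + 1))).filter
    fun t => t.2.1 + t.2.2 + t.1 = i).card

lemma cnt3_sum (p q m i : ℕ) :
    cnt3 p q m i = ∑ w ∈ range (m + 1), T2 p q ((i : ℤ) - w) := by
  unfold cnt3
  rw [Finset.card_eq_sum_card_fiberwise (f := fun t => t.1) (t := range (m + 1))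
    (fun x hx => by simp only [Finset.mem_coe, mem_filter, mem_product] at hx; exact hx.1.1)]
  apply Finset.sum_congr rfl
  intro w hw
  simp only [mem_range] at hw
  unfold T2
  apply Finset.card_nbij' (fun t => t.2) (fun v => (w, v))
  · intro t ht
    simp only [Finset.mem_coe, mem_filter, mem_product, mem_range] at ht ⊢
    push_cast
    omega
  · intro v hv
    simp only [Finset.mem_coe, mem_filter, mem_product, mem_range] at hv ⊢
    exact ⟨⟨⟨by omega, by omega, by omega⟩, by omega⟩, trivial⟩
  · intro t ht
    simp only [Finset.mem_coe, mem_filter, mem_product, mem_range] at ht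
    exact Prod.ext ht.2.symm rfl
  · intro v hv
    rfl

lemma cnt3_delta (p q m i : ℕ) :
    (cnt3 p q m (i + 1) : ℤ) + Trap p q ((i : ℤ) - m)
      = (cnt3 p q m i : ℤ) + Trap p q ((i : ℤ) + 1) := by
  have e1 : (cnt3 p q m (i + 1) : ℤ) = ∑ w ∈ range (m + 1), Trap p q ((i : ℤ) + 1 - w) := by
    rw [cnt3_sum]
    push_cast
    apply Finset.sum_congr rfl
    intro w _
    rw [T2_eq]
  have e2 : (cnt3 p q m i : ℤ) = ∑ w ∈ range (m + 1), Trap p q ((i : ℤ) + 1 - (w + 1)) := by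
    rw [cnt3_sum]
    push_cast
    apply Finset.sum_congr rfl
    intro w _
    rw [T2_eq]
    congr 1
    ring
  have e3 := Finset.sum_range_sub' (fun w => Trap p q ((i : ℤ) + 1 - w)) (m + 1)
  rw [Finset.sum_sub_distrib] at e3
  have e5 : Trap (p : ℤ) q ((i : ℤ) + 1 - ((0 : ℕ) : ℤ)) = Trap (p : ℤ) q ((i : ℤ) + 1) := by
    congr 1 <;> (push_cast; try ring)
  have e6 : Trap (p : ℤ) q ((i : ℤ) + 1 - ((m + 1 : ℕ) : ℤ)) = Trap (p : ℤ) q ((i : ℤ) - m) := by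
    congr 1 <;> (push_cast; try ring)
  rw [e5, e6] at e3
  have e7 : ∀ w ∈ range (m + 1), Trap (p : ℤ) q ((i : ℤ) + 1 - ((w + 1 : ℕ) : ℤ))
      = Trap (p : ℤ) q ((i : ℤ) + 1 - ((w : ℤ) + 1)) := by
    intro w _
    congr 1 <;> (push_cast; try ring)
  rw [Finset.sum_congr rfl e7] at e3
  rw [e1, e2]
  linarith [e3]


/-- The divisors of the monomial `D` in three variables. -/
def divs (D : Fin 3 → ℕ) : Finset (Fin 3 → ℕ) :=
  ((range (D 0 + 1) ×ˢ range (D 1 + 1) ×ˢ range (D 2 + 1))).image fun t => ![t.1, t.2.1, t.2.2]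

lemma mem_divs {D M : Fin 3 → ℕ} : M ∈ divs D ↔ ∀ j, M j ≤ D j := by
  constructor
  · intro h
    simp only [divs, mem_image, mem_product, mem_range] at h
    obtain ⟨t, ⟨h1, h2, h3⟩, rfl⟩ := h
    intro j
    fin_cases j <;> simp <;> omega
  · intro h
    simp only [divs, mem_image, mem_product, mem_range]
    refine ⟨(M 0, M 1, M 2), ⟨show M 0 < D 0 + 1 by have := h 0; omega,
      show M 1 < D 1 + 1 by have := h 1; omega,
      show M 2 < D 2 + 1 by have := h 2; omega⟩, ?_⟩
    funext j; fin_cases j <;> rfl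

lemma sum_three (ja jb j0 : Fin 3) (hab : ja ≠ jb) (ha0 : ja ≠ j0) (hb0 : jb ≠ j0)
    (hcov : ∀ j : Fin 3, j = ja ∨ j = jb ∨ j = j0) (M : Fin 3 → ℕ) :
    monDeg M = M ja + M jb + M j0 := by
  have huniv : (Finset.univ : Finset (Fin 3)) = {ja, jb, j0} := by
    ext j
    simp only [Finset.mem_univ, Finset.mem_insert, Finset.mem_singleton, true_iff]
    exact hcov j
  rw [monDeg, huniv, Finset.sum_insert (by simp [hab, ha0]),
    Finset.sum_insert (by simp [hb0]), Finset.sum_singleton]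
  ring

lemma slice_card (D : Fin 3 → ℕ) (i : ℕ) (ja jb j0 : Fin 3)
    (hab : ja ≠ jb) (ha0 : ja ≠ j0) (hb0 : jb ≠ j0)
    (hcov : ∀ j : Fin 3, j = ja ∨ j = jb ∨ j = j0) :
    ((divs D).filter fun M => monDeg M = i).card = cnt3 (D ja) (D jb) (D j0) i := by
  have hsum := sum_three ja jb j0 hab ha0 hb0 hcov
  unfold cnt3
  apply Finset.card_nbij' (fun M => (M j0, (M ja, M jb)))
    (fun t => fun j => if j = ja then t.2.1 else if j = jb then t.2.2 else t.1)
  · intro M hM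
    rw [Finset.mem_coe, Finset.mem_filter] at hM
    obtain ⟨hMd, hdeg⟩ := hM
    have hle := mem_divs.1 hMd
    simp only [Finset.mem_coe, mem_filter, mem_product, mem_range]
    refine ⟨⟨?_, ?_, ?_⟩, ?_⟩
    · have := hle j0; omega
    · have := hle ja; omega
    · have := hle jb; omega
    · rw [hsum M] at hdeg; omega
  · intro t ht
    simp only [Finset.mem_coe, mem_filter, mem_product, mem_range] at ht
    obtain ⟨⟨h1, h2, h3⟩, h4⟩ := ht
    rw [Finset.mem_coe, Finset.mem_filter]
    beta_reduce
    constructor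
    · rw [mem_divs]
      intro j
      rcases hcov j with rfl | rfl | rfl
      · rw [if_pos rfl]; omega
      · rw [if_neg (Ne.symm hab), if_pos rfl]; omega
      · rw [if_neg (Ne.symm ha0), if_neg (Ne.symm hb0)]; omega
    · rw [hsum, if_pos rfl, if_neg (Ne.symm hab), if_pos rfl,
        if_neg (Ne.symm ha0), if_neg (Ne.symm hb0)]
      omega
  · intro M hM
    funext j
    beta_reduce
    rcases hcov j with rfl | rfl | rfl
    · rw [if_pos rfl]
    · rw [if_neg (Ne.symm hab), if_pos rfl]
    · rw [if_neg (Ne.symm ha0), if_neg (Ne.symm hb0)]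
  · intro t ht
    beta_reduce
    rw [if_pos rfl, if_neg (Ne.symm hab), if_pos rfl,
      if_neg (Ne.symm ha0), if_neg (Ne.symm hb0)]

lemma divs_inter (A B : Fin 3 → ℕ) :
    divs A ∩ divs B = divs (fun j => min (A j) (B j)) := by
  ext M
  simp only [Finset.mem_inter, mem_divs]
  constructor
  · rintro ⟨h1, h2⟩ j
    exact le_min (h1 j) (h2 j)
  · intro h
    exact ⟨fun j => (h j).trans (min_le_left _ _), fun j => (h j).trans (min_le_right _ _)⟩

lemma noValley (X : Finset (Fin 3 → ℕ)) (e : ℕ) (h : ℕ → ℕ) (A B : Fin 3 → ℕ)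
    (hXmem : ∀ M, M ∈ X ↔ ((∀ j, M j ≤ A j) ∨ (∀ j, M j ≤ B j)))
    (hdA : monDeg A = e) (hdB : monDeg B = e)
    (ja jb j0 : Fin 3) (hab : ja ≠ jb) (ha0 : ja ≠ j0) (hb0 : jb ≠ j0)
    (hcov : ∀ j : Fin 3, j = ja ∨ j = jb ∨ j = j0)
    (hj0 : A j0 < B j0) (hja : B ja ≤ A ja) (hjb : B jb ≤ A jb)
    (hh : ∀ i ≤ e, h i = (X.filter fun M => monDeg M = i).card) :
    ∀ i i' : ℕ, i < i' → i' < e → h (i + 1) < h i → h (i' + 1) ≤ h i' := by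
  set C : Fin 3 → ℕ := fun j => min (A j) (B j) with hC
  have hX : X = divs A ∪ divs B := by
    ext M
    rw [Finset.mem_union, hXmem M, mem_divs, mem_divs]
  have hcnt : ∀ i ≤ e, h i + cnt3 (C ja) (C jb) (C j0) i
      = cnt3 (A ja) (A jb) (A j0) i + cnt3 (B ja) (B jb) (B j0) i := by
    intro i hi
    rw [hh i hi, hX, Finset.filter_union,
      ← slice_card A i ja jb j0 hab ha0 hb0 hcov,
      ← slice_card B i ja jb j0 hab ha0 hb0 hcov,
      ← slice_card C i ja jb j0 hab ha0 hb0 hcov,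
      hC, ← divs_inter A B, Finset.filter_inter_distrib]
    exact Finset.card_union_add_card_inter _ _
  have hCja : C ja = B ja := min_eq_right hja
  have hCjb : C jb = B jb := min_eq_right hjb
  have hCj0 : C j0 = A j0 := min_eq_left (le_of_lt hj0)
  rw [hCja, hCjb, hCj0] at hcnt
  have hdelta : ∀ i : ℕ, i < e → (h (i + 1) : ℤ) - h i =
      Trap (A ja) (A jb) ((i : ℤ) + 1) - Trap (A ja) (A jb) ((i : ℤ) - A j0)
      + Trap (B ja) (B jb) ((i : ℤ) - A j0) - Trap (B ja) (B jb) ((i : ℤ) - B j0) := by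
    intro i hi
    have c1 := hcnt i (le_of_lt hi)
    have c2 := hcnt (i + 1) (by omega)
    have dA := cnt3_delta (A ja) (A jb) (A j0) i
    have dB := cnt3_delta (B ja) (B jb) (B j0) i
    have dC := cnt3_delta (B ja) (B jb) (A j0) i
    have c1' : ((h i : ℤ)) + cnt3 (B ja) (B jb) (A j0) i
        = cnt3 (A ja) (A jb) (A j0) i + cnt3 (B ja) (B jb) (B j0) i := by exact_mod_cast c1
    have c2' : ((h (i + 1) : ℤ)) + cnt3 (B ja) (B jb) (A j0) (i + 1)
        = cnt3 (A ja) (A jb) (A j0) (i + 1) + cnt3 (B ja) (B jb) (B j0) (i + 1) := by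
      exact_mod_cast c2
    linarith
  intro i i' hii hi'e hdec
  have hsumA := sum_three ja jb j0 hab ha0 hb0 hcov A
  have hsumB := sum_three ja jb j0 hab ha0 hb0 hcov B
  rw [hdA] at hsumA
  rw [hdB] at hsumB
  have hdegZ : (A ja : ℤ) + A jb + A j0 = (B ja : ℤ) + B jb + B j0 := by
    push_cast
    omega
  have hF : Trap (A ja) (A jb) ((i : ℤ) + 1) - Trap (A ja) (A jb) ((i : ℤ) - A j0)
      + Trap (B ja) (B jb) ((i : ℤ) - A j0) - Trap (B ja) (B jb) ((i : ℤ) - B j0) < 0 := by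
    have hd := hdelta i (by omega)
    have : (h (i + 1) : ℤ) < h i := by exact_mod_cast hdec
    linarith
  have hkey := Tkey (p := (A ja : ℤ)) (q := (A jb : ℤ)) (p' := (B ja : ℤ)) (q' := (B jb : ℤ))
    (m := (A j0 : ℤ)) (m' := (B j0 : ℤ)) (i := (i : ℤ)) (i' := (i' : ℤ))
    (by positivity) (by exact_mod_cast hja) (by positivity) (by exact_mod_cast hjb)
    (by positivity) (by exact_mod_cast hj0) hdegZ
    (by positivity) (by exact_mod_cast hii) (by push_cast; omega) hF
  have hd' := hdelta i' hi'e
  have : (h (i' + 1) : ℤ) ≤ h i' := by linarith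
  exact_mod_cast this


lemma exists_max_above {r : ℕ} (X : Finset (Fin r → ℕ)) (hOI : IsOrderIdeal X)
    (M : Fin r → ℕ) (hM : M ∈ X) : ∃ N, IsMaxMon X N ∧ ∀ j, M j ≤ N j := by
  classical
  set Y := X.filter (fun N => ∀ j, M j ≤ N j) with hY
  have hMY : M ∈ Y := Finset.mem_filter.2 ⟨hM, fun j => le_rfl⟩
  obtain ⟨N, hNY, hNmax⟩ := Finset.exists_max_image Y monDeg ⟨M, hMY⟩
  obtain ⟨hNX, hMN⟩ := Finset.mem_filter.1 hNY
  refine ⟨N, ⟨hNX, ?_⟩, hMN⟩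
  intro P hPX hNP
  have hPY : P ∈ Y := Finset.mem_filter.2 ⟨hPX, fun j => le_trans (hMN j) (hNP j)⟩
  have hdeg := hNmax P hPY
  funext j
  by_contra hne
  have hlt : N j < P j := lt_of_le_of_ne (hNP j) (fun hc => hne hc.symm)
  have : monDeg N < monDeg P :=
    Finset.sum_lt_sum (fun k _ => hNP k) ⟨j, Finset.mem_univ j, hlt⟩
  omega

lemma structured (X : Finset (Fin 3 → ℕ)) (e : ℕ) (h : ℕ → ℕ) (A B : Fin 3 → ℕ)
    (hXmem : ∀ M, M ∈ X ↔ ((∀ j, M j ≤ A j) ∨ (∀ j, M j ≤ B j)))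
    (hdA : monDeg A = e) (hdB : monDeg B = e)
    (hone : (Finset.univ.filter (fun j => A j < B j)).card = 1)
    (hh : ∀ i ≤ e, h i = (X.filter fun M => monDeg M = i).card) :
    ∀ i i' : ℕ, i < i' → i' < e → h (i + 1) < h i → h (i' + 1) ≤ h i' := by
  obtain ⟨j0, hj0set⟩ := Finset.card_eq_one.1 hone
  have hj0 : A j0 < B j0 := by
    have : j0 ∈ Finset.univ.filter (fun j => A j < B j) := by
      rw [hj0set]; exact Finset.mem_singleton_self j0
    exact (Finset.mem_filter.1 this).2
  have hother : ∀ j, j ≠ j0 → B j ≤ A j := by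
    intro j hj
    by_contra hc
    push_neg at hc
    have : j ∈ Finset.univ.filter (fun j => A j < B j) :=
      Finset.mem_filter.2 ⟨Finset.mem_univ j, hc⟩
    rw [hj0set] at this
    exact hj (Finset.mem_singleton.1 this)
  fin_cases j0
  · exact noValley X e h A B hXmem hdA hdB 1 2 0 (by decide) (by decide) (by decide)
      (by decide) hj0 (hother 1 (by decide)) (hother 2 (by decide)) hh
  · exact noValley X e h A B hXmem hdA hdB 0 2 1 (by decide) (by decide) (by decide)
      (by decide) hj0 (hother 0 (by decide)) (hother 2 (by decide)) hh
  · exact noValley X e h A B hXmem hdA hdB 0 1 2 (by decide) (by decide) (by decide)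
      (by decide) hj0 (hother 0 (by decide)) (hother 1 (by decide)) hh

theorem main3 (X : Finset (Fin 3 → ℕ)) (e : ℕ) (h : ℕ → ℕ)
    (hpure : IsPureWithSocle X e)
    (htype : {M : Fin 3 → ℕ | IsMaxMon X M}.ncard = 2)
    (hh : HasHVector X h e) :
    ∃ j ≤ e, (∀ i, i < j → h i ≤ h (i + 1)) ∧
      ∀ i, j ≤ i → i < e → h (i + 1) ≤ h i := by
  classical
  obtain ⟨A, B, hABne, hset⟩ := Set.ncard_eq_two.1 htype
  have hAmax : IsMaxMon X A := by
    have : A ∈ {M : Fin 3 → ℕ | IsMaxMon X M} := by rw [hset]; exact Set.mem_insert _ _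
    exact this
  have hBmax : IsMaxMon X B := by
    have : B ∈ {M : Fin 3 → ℕ | IsMaxMon X M} := by
      rw [hset]; exact Set.mem_insert_of_mem _ rfl
    exact this
  have hXmem : ∀ M, M ∈ X ↔ ((∀ j, M j ≤ A j) ∨ (∀ j, M j ≤ B j)) := by
    intro M
    constructor
    · intro hM
      obtain ⟨N, hNmax, hMN⟩ := exists_max_above X hpure.1 M hM
      have : N ∈ {M : Fin 3 → ℕ | IsMaxMon X M} := hNmax
      rw [hset] at this
      rcases this with rfl | rfl
      · exact Or.inl hMN
      · exact Or.inr hMN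
    · rintro (hle | hle)
      · exact hpure.1.2 A hAmax.1 M hle
      · exact hpure.1.2 B hBmax.1 M hle
  have hdA : monDeg A = e := hpure.2.2.2 A hAmax
  have hdB : monDeg B = e := hpure.2.2.2 B hBmax
  have hexAB : ∃ j, A j < B j := by
    by_contra hc
    push_neg at hc
    exact hABne (hBmax.2 A hAmax.1 hc)
  have hexBA : ∃ j, B j < A j := by
    by_contra hc
    push_neg at hc
    exact hABne (hAmax.2 B hBmax.1 hc).symm
  -- the two filters are disjoint nonempty subsets of `Fin 3`
  set S := Finset.univ.filter (fun j => A j < B j) with hS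
  set S' := Finset.univ.filter (fun j => B j < A j) with hS'
  have hSne : 1 ≤ S.card := by
    obtain ⟨j, hj⟩ := hexAB
    exact Finset.card_pos.2 ⟨j, Finset.mem_filter.2 ⟨Finset.mem_univ j, hj⟩⟩
  have hS'ne : 1 ≤ S'.card := by
    obtain ⟨j, hj⟩ := hexBA
    exact Finset.card_pos.2 ⟨j, Finset.mem_filter.2 ⟨Finset.mem_univ j, hj⟩⟩
  have hdisj : Disjoint S S' := by
    rw [Finset.disjoint_left]
    intro j hj hj'
    have h1 := (Finset.mem_filter.1 hj).2
    have h2 := (Finset.mem_filter.1 hj').2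
    omega
  have hsum3 : S.card + S'.card ≤ 3 := by
    have := Finset.card_union_of_disjoint hdisj
    have h2 : (S ∪ S').card ≤ (Finset.univ : Finset (Fin 3)).card :=
      Finset.card_le_card (Finset.subset_univ _)
    simp only [Finset.card_univ, Fintype.card_fin] at h2
    omega
  -- the no-valley property
  have nv : ∀ i i' : ℕ, i < i' → i' < e → h (i + 1) < h i → h (i' + 1) ≤ h i' := by
    rcases Nat.lt_or_ge S.card 2 with hc | hc
    · exact structured X e h A B hXmem hdA hdB (by rw [← hS]; omega) hh
    · have hc' : S'.card = 1 := by omega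
      refine structured X e h B A ?_ hdB hdA hc' hh
      intro M
      rw [hXmem M]
      exact or_comm
  -- assemble unimodality
  by_cases H : ∃ i, i < e ∧ h (i + 1) < h i
  · set j := Nat.find H with hj
    have hspec := Nat.find_spec H
    refine ⟨j, by omega, ?_, ?_⟩
    · intro i hij
      have := Nat.find_min H hij
      push_neg at this
      rcases Nat.lt_or_ge i e with hie | hie
      · exact this hie
      · omega
    · intro i hji hie
      rcases Nat.eq_or_lt_of_le hji with rfl | hlt
      · exact le_of_lt hspec.2
      · exact nv j i hlt hie hspec.2
  · push_neg at H
    exact ⟨e, le_rfl, fun i hi => H i hi, fun i hi hie => by omega⟩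

section Pad
variable {r : ℕ}

def pad (hr : r ≤ 3) (M : Fin r → ℕ) : Fin 3 → ℕ :=
  fun j => if hj : (j : ℕ) < r then M ⟨j, hj⟩ else 0

def res (hr : r ≤ 3) (N : Fin 3 → ℕ) : Fin r → ℕ :=
  fun j => N ⟨j, lt_of_lt_of_le j.2 hr⟩

lemma pad_app_lt (hr : r ≤ 3) (M : Fin r → ℕ) (j : Fin 3) (hj : (j : ℕ) < r) :
    pad hr M j = M ⟨j, hj⟩ := dif_pos hj

lemma pad_app_ge (hr : r ≤ 3) (M : Fin r → ℕ) (j : Fin 3) (hj : ¬(j : ℕ) < r) :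
    pad hr M j = 0 := dif_neg hj

lemma pad_res (hr : r ≤ 3) (N : Fin 3 → ℕ) (h0 : ∀ j : Fin 3, ¬(j : ℕ) < r → N j = 0) :
    pad hr (res hr N) = N := by
  funext j
  by_cases hj : (j : ℕ) < r
  · rw [pad_app_lt hr _ j hj]; rfl
  · rw [pad_app_ge hr _ j hj, h0 j hj]

lemma pad_inj (hr : r ≤ 3) : Function.Injective (pad hr) := by
  intro M N hMN
  funext j
  have := congrFun hMN ⟨(j : ℕ), lt_of_lt_of_le j.2 hr⟩
  rwa [pad_app_lt hr M _ j.2, pad_app_lt hr N _ j.2] at this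

lemma pad_le_iff (hr : r ≤ 3) (M N : Fin r → ℕ) :
    (∀ j, pad hr M j ≤ pad hr N j) ↔ ∀ j, M j ≤ N j := by
  constructor
  · intro h j
    have := h ⟨(j : ℕ), lt_of_lt_of_le j.2 hr⟩
    rwa [pad_app_lt hr M _ j.2, pad_app_lt hr N _ j.2] at this
  · intro h j
    by_cases hj : (j : ℕ) < r
    · rw [pad_app_lt hr M j hj, pad_app_lt hr N j hj]; exact h _
    · rw [pad_app_ge hr M j hj, pad_app_ge hr N j hj]

lemma monDeg_pad (hr : r ≤ 3) (M : Fin r → ℕ) : monDeg (pad hr M) = monDeg M := by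
  have h3 : monDeg (pad hr M)
      = ∑ i ∈ range 3, (fun i => if h : i < r then M ⟨i, h⟩ else 0) i := by
    rw [monDeg]
    exact Fin.sum_univ_eq_sum_range (fun i => if h : i < r then M ⟨i, h⟩ else 0) 3
  have h4 : ∑ i ∈ range r, (fun i => if h : i < r then M ⟨i, h⟩ else 0) i
      = ∑ i ∈ range 3, (fun i => if h : i < r then M ⟨i, h⟩ else 0) i :=
    Finset.sum_subset (Finset.range_subset_range.2 hr)
      (fun i _ hir => dif_neg (by simpa using hir))
  have h5 : monDeg M = ∑ i ∈ range r, (fun i => if h : i < r then M ⟨i, h⟩ else 0) i := by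
    rw [monDeg, ← Fin.sum_univ_eq_sum_range (fun i => if h : i < r then M ⟨i, h⟩ else 0) r]
    exact Finset.sum_congr rfl (fun j _ => by rw [dif_pos j.2])
  rw [h3, ← h4, ← h5]

end Pad

theorem pure_type_two_three_vars_unimodal' (r : ℕ) (hr : r ≤ 3)
    (X : Finset (Fin r → ℕ)) (e : ℕ) (h : ℕ → ℕ)
    (hpure : IsPureWithSocle X e)
    (htype : {M : Fin r → ℕ | IsMaxMon X M}.ncard = 2)
    (hh : HasHVector X h e) :
    ∃ j ≤ e, (∀ i, i < j → h i ≤ h (i + 1)) ∧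
      ∀ i, j ≤ i → i < e → h (i + 1) ≤ h i := by
  classical
  set X' := X.image (pad hr) with hX'
  have memX' : ∀ N, N ∈ X' ↔ ∃ M ∈ X, pad hr M = N := by
    intro N
    simp [hX', Finset.mem_image]
  have maxX' : {N : Fin 3 → ℕ | IsMaxMon X' N} = pad hr '' {M : Fin r → ℕ | IsMaxMon X M} := by
    ext N
    constructor
    · intro hN
      obtain ⟨M, hMX, rfl⟩ := (memX' N).1 hN.1
      refine ⟨M, ⟨hMX, ?_⟩, rfl⟩
      intro P hP hMP
      have hP' : pad hr P ∈ X' := Finset.mem_image_of_mem _ hP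
      have hle : ∀ j, pad hr M j ≤ pad hr P j := (pad_le_iff hr M P).2 hMP
      exact pad_inj hr (hN.2 (pad hr P) hP' hle)
    · rintro ⟨M, hM, rfl⟩
      refine ⟨Finset.mem_image_of_mem _ hM.1, ?_⟩
      intro N' hN' hle
      obtain ⟨P, hP, rfl⟩ := (memX' N').1 hN'
      rw [hM.2 P hP ((pad_le_iff hr M P).1 hle)]
  have htype' : {N : Fin 3 → ℕ | IsMaxMon X' N}.ncard = 2 := by
    rw [maxX', Set.ncard_image_of_injective _ (pad_inj hr)]
    exact htype
  have hpure' : IsPureWithSocle X' e := by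
    refine ⟨⟨?_, ?_⟩, ?_, ?_, ?_⟩
    · obtain ⟨M0, hM0⟩ := hpure.1.1
      exact ⟨pad hr M0, Finset.mem_image_of_mem _ hM0⟩
    · intro N hN P hP
      obtain ⟨M, hM, rfl⟩ := (memX' N).1 hN
      have hP0 : ∀ j : Fin 3, ¬(j : ℕ) < r → P j = 0 := by
        intro j hj
        have := hP j
        rw [pad_app_ge hr M j hj] at this
        omega
      have hPM : ∀ j : Fin r, res hr P j ≤ M j := by
        intro j
        have := hP ⟨(j : ℕ), lt_of_lt_of_le j.2 hr⟩
        rwa [pad_app_lt hr M _ j.2] at this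
      have hres : res hr P ∈ X := hpure.1.2 M hM _ hPM
      rw [memX' P]
      exact ⟨res hr P, hres, pad_res hr P hP0⟩
    · intro N hN
      obtain ⟨M, hM, rfl⟩ := (memX' N).1 hN
      rw [monDeg_pad]
      exact hpure.2.1 M hM
    · obtain ⟨M, hM, hMd⟩ := hpure.2.2.1
      exact ⟨pad hr M, Finset.mem_image_of_mem _ hM, by rwa [monDeg_pad]⟩
    · intro N hN
      have : N ∈ {N : Fin 3 → ℕ | IsMaxMon X' N} := hN
      rw [maxX'] at this
      obtain ⟨M, hM, rfl⟩ := this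
      rw [monDeg_pad]
      exact hpure.2.2.2 M hM
  have hh' : HasHVector X' h e := by
    intro i hi
    rw [hh i hi]
    have hfilter : X'.filter (fun M => monDeg M = i)
        = (X.filter (fun M => monDeg M = i)).image (pad hr) := by
      rw [hX', Finset.filter_image]
      congr 1
      apply Finset.filter_congr
      intro M _
      rw [monDeg_pad]
    rw [hfilter, Finset.card_image_of_injective _ (pad_inj hr)]
  exact main3 X' e h hpure' htype' hh'

/-- Every pure O-sequence of type 2 in at most three variables is
unimodal: the h-vector of a pure monomial order ideal in `r ≤ 3` variables with exactly
two maximal monomials is unimodal. -/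
theorem pure_type_two_three_vars_unimodal (r : ℕ) (hr : r ≤ 3)
    (X : Finset (Fin r → ℕ)) (e : ℕ) (h : ℕ → ℕ)
    (hpure : IsPureWithSocle X e)
    (htype : {M : Fin r → ℕ | IsMaxMon X M}.ncard = 2)
    (hh : HasHVector X h e) :
    ∃ j ≤ e, (∀ i, i < j → h i ≤ h (i + 1)) ∧
      ∀ i, j ≤ i → i < e → h (i + 1) ≤ h i := by
  exact pure_type_two_three_vars_unimodal' r hr X e h hpure htype hh
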